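/- For every integer n ≥ 1, lim_{x→+∞} Φ_n(x)/log^n(x) = 1/n!, where Φ_n(z) := −Li_n(−z) and Li_n is the polylogarithm of order n. -/

import Mathlib

/-- `Φ_n(x) := -Li_n(-x)` for real `x ≥ 0`, defined via `Φ_0(x) = x/(1+x)` (from
`Li_0(z) = z/(1-z)`) and the standard recursion `Li_{σ+1}(z) = ∫_0^z Li_σ(t)/t dt`,
which realizes the analytic continuation of the power series along the positive reals. -/
noncomputable def Phi : ℕ → ℝ → ℝ
  | 0, x => x / (1 + x)
  | (n + 1), x => ∫ t in (0 : ℝ)..x, Phi n t / t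

open Real MeasureTheory intervalIntegral Set Filter

lemma phi_basic (n : ℕ) :
    (∀ t : ℝ, 0 ≤ t → 0 ≤ Phi n t ∧ Phi n t ≤ t) ∧
      LipschitzOnWith 1 (Phi n) (Set.Ici (0:ℝ)) := by
  induction n with
  | zero =>
    constructor
    · intro t ht
      have h1 : (0:ℝ) < 1 + t := by linarith
      constructor
      · exact div_nonneg ht h1.le
      · show t/(1+t) ≤ t
        rw [div_le_iff₀ h1]; nlinarith
    · rw [lipschitzOnWith_iff_dist_le_mul]
      intro x hx y hy
      simp only [Set.mem_Ici] at hx hy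
      rw [Real.dist_eq, Real.dist_eq]
      have hx1 : (0:ℝ) < 1 + x := by linarith
      have hy1 : (0:ℝ) < 1 + y := by linarith
      have key : Phi 0 x - Phi 0 y = (x - y) / ((1+x)*(1+y)) := by
        show x/(1+x) - y/(1+y) = _
        field_simp
        ring
      rw [key, abs_div]
      have h2 : (1:ℝ) ≤ |(1+x)*(1+y)| := by
        rw [abs_of_pos (by positivity)]; nlinarith
      calc |x - y| / |(1+x)*(1+y)| ≤ |x - y| / 1 := by
            apply div_le_div_of_nonneg_left (abs_nonneg _) one_pos h2
        _ = 1 * |x - y| := by ring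
  | succ n ih =>
    obtain ⟨hb, hl⟩ := ih
    have hcont : ContinuousOn (fun t : ℝ => Phi n t / t) {t : ℝ | 0 < t} := by
      apply ContinuousOn.div
      · exact (hl.continuousOn).mono (fun t (ht : 0 < t) => Set.mem_Ici.mpr (le_of_lt ht))
      · exact continuousOn_id
      · intro t ht; exact ne_of_gt ht
    have hbound : ∀ t : ℝ, 0 < t → ‖Phi n t / t‖ ≤ 1 := by
      intro t ht
      rw [Real.norm_eq_abs, abs_of_nonneg (div_nonneg (hb t ht.le).1 ht.le)]
      exact div_le_one_of_le₀ (hb t ht.le).2 ht.le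
    have hint : ∀ a b : ℝ, 0 ≤ a → 0 ≤ b →
        IntervalIntegrable (fun t : ℝ => Phi n t / t) volume a b := by
      intro a b ha hbb
      have hM : IntegrableOn (fun t : ℝ => Phi n t / t) (Ioc 0 (max a b)) volume := by
        apply Integrable.mono' (integrable_const (1:ℝ))
        · exact (hcont.mono (fun t ht => ht.1)).aestronglyMeasurable measurableSet_Ioc
        · refine (ae_restrict_iff' measurableSet_Ioc).2 (ae_of_all _ ?_)
          intro t ht; exact hbound t ht.1
      rw [intervalIntegrable_iff]
      exact hM.mono_set (fun t ht => ⟨lt_of_lt_of_le (lt_of_le_of_lt (le_min ha hbb) ht.1) le_rfl, le_trans ht.2 (max_le (le_max_left a b) (le_max_right a b))⟩)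
    constructor
    · intro t ht
      constructor
      · apply intervalIntegral.integral_nonneg ht
        intro u hu
        rcases eq_or_lt_of_le hu.1 with h0 | h0
        · have : Phi n 0 = 0 := le_antisymm (hb 0 le_rfl).2 (hb 0 le_rfl).1
          simp [← h0, this]
        · exact div_nonneg (hb u h0.le).1 h0.le
      · have := intervalIntegral.norm_integral_le_of_norm_le_const
          (C := 1) (f := fun t : ℝ => Phi n t / t) (a := (0:ℝ)) (b := t) ?_
        · have h2 : Phi (n+1) t ≤ |Phi (n+1) t| := le_abs_self _
          calc Phi (n+1) t ≤ ‖∫ u in (0:ℝ)..t, Phi n u / u‖ := le_abs_self _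
            _ ≤ 1 * |t - 0| := this
            _ = t := by rw [abs_of_nonneg (by linarith)]; ring
        · intro u hu
          rw [Set.uIoc_of_le ht] at hu
          exact hbound u hu.1
    · rw [lipschitzOnWith_iff_dist_le_mul]
      intro x hx y hy
      simp only [Set.mem_Ici] at hx hy
      rw [Real.dist_eq, Real.dist_eq]
      have key : Phi (n+1) x - Phi (n+1) y = ∫ u in y..x, Phi n u / u := by
        show (∫ u in (0:ℝ)..x, Phi n u / u) - (∫ u in (0:ℝ)..y, Phi n u / u) = _
        exact intervalIntegral.integral_interval_sub_left (hint 0 x le_rfl hx) (hint 0 y le_rfl hy)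
      rw [key]
      have := intervalIntegral.norm_integral_le_of_norm_le_const
          (C := 1) (f := fun t : ℝ => Phi n t / t) (a := y) (b := x) ?_
      · calc ‖∫ u in y..x, Phi n u / u‖ ≤ 1 * |x - y| := this
          _ = 1 * |x - y| := rfl
      · intro u hu
        apply hbound
        rcases le_total y x with h | h
        · rw [Set.uIoc_of_le h] at hu; exact lt_of_le_of_lt hy hu.1
        · rw [Set.uIoc_of_ge h] at hu; exact lt_of_le_of_lt hx hu.1


lemma phi_nonneg (n : ℕ) {t : ℝ} (ht : 0 ≤ t) : 0 ≤ Phi n t := ((phi_basic n).1 t ht).1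
lemma phi_le (n : ℕ) {t : ℝ} (ht : 0 ≤ t) : Phi n t ≤ t := ((phi_basic n).1 t ht).2

lemma phi_int (n : ℕ) {a b : ℝ} (ha : 0 ≤ a) (hb : 0 ≤ b) :
    IntervalIntegrable (fun t : ℝ => Phi n t / t) volume a b := by
  obtain ⟨hbb, hl⟩ := phi_basic n
  have hcont : ContinuousOn (fun t : ℝ => Phi n t / t) {t : ℝ | 0 < t} := by
    apply ContinuousOn.div
    · exact (hl.continuousOn).mono (fun t (ht : 0 < t) => Set.mem_Ici.mpr (le_of_lt ht))
    · exact continuousOn_id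
    · intro t ht; exact ne_of_gt ht
  have hM : IntegrableOn (fun t : ℝ => Phi n t / t) (Ioc 0 (max a b)) volume := by
    apply Integrable.mono' (integrable_const (1:ℝ))
    · exact (hcont.mono (fun t ht => ht.1)).aestronglyMeasurable measurableSet_Ioc
    · refine (ae_restrict_iff' measurableSet_Ioc).2 (ae_of_all _ ?_)
      intro t ht
      rw [Real.norm_eq_abs, abs_of_nonneg (div_nonneg (hbb t ht.1.le).1 ht.1.le)]
      exact div_le_one_of_le₀ (hbb t ht.1.le).2 ht.1.le
  rw [intervalIntegrable_iff]
  exact hM.mono_set (fun t ht =>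
    ⟨lt_of_le_of_lt (le_min ha hb) ht.1, le_trans ht.2 (max_le (le_max_left a b) (le_max_right a b))⟩)

lemma phi_one {x : ℝ} (hx : 0 ≤ x) : Phi 1 x = Real.log (1 + x) := by
  show (∫ t in (0:ℝ)..x, Phi 0 t / t) = Real.log (1 + x)
  have h1 : (∫ t in (0:ℝ)..x, Phi 0 t / t) = ∫ t in (0:ℝ)..x, 1 / (1 + t) := by
    apply intervalIntegral.integral_congr_ae
    apply ae_of_all
    intro t ht
    rw [Set.uIoc_of_le hx] at ht
    have ht0 : 0 < t := ht.1
    show (t / (1+t)) / t = 1 / (1+t)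
    rw [div_div, mul_comm, ← div_div, div_self (ne_of_gt ht0)]
  rw [h1]
  have : ∀ t ∈ Set.uIcc (0:ℝ) x, HasDerivAt (fun u => Real.log (1 + u)) (1 / (1 + t)) t := by
    intro t ht
    rw [Set.uIcc_of_le hx] at ht
    have h1t : (0:ℝ) < 1 + t := by have := ht.1; linarith
    have := ((hasDerivAt_id t).const_add 1).log (ne_of_gt h1t)
    simpa using this
  rw [intervalIntegral.integral_eq_sub_of_hasDerivAt this ?_]
  · simp
  · apply ContinuousOn.intervalIntegrable
    apply ContinuousOn.div continuousOn_const
    · exact continuousOn_const.add continuousOn_id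
    · intro t ht
      rw [Set.uIcc_of_le hx] at ht
      have := ht.1; intro h; linarith [h]

lemma int_logpow (k : ℕ) (c : ℝ) {x : ℝ} (hx : 1 ≤ x) :
    ∫ t in (1:ℝ)..x, (Real.log t + c) ^ k / t
      = ((Real.log x + c) ^ (k+1) - c ^ (k+1)) / (k+1) := by
  have hderiv : ∀ t ∈ Set.uIcc (1:ℝ) x,
      HasDerivAt (fun u : ℝ => (Real.log u + c) ^ (k+1) / (k+1))
        ((Real.log t + c) ^ k / t) t := by
    intro t ht
    rw [Set.uIcc_of_le hx] at ht
    have ht0 : (0:ℝ) < t := lt_of_lt_of_le one_pos ht.1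
    have h1 : HasDerivAt (fun u : ℝ => Real.log u + c) t⁻¹ t :=
      (Real.hasDerivAt_log (ne_of_gt ht0)).add_const c
    have h2 := (h1.pow (k+1)).div_const ((k:ℝ)+1)
    have hne : ((k:ℝ)+1) ≠ 0 := by positivity
    refine h2.congr_deriv ?_
    rw [Nat.add_sub_cancel]; push_cast
    field_simp
  have hint : IntervalIntegrable (fun t : ℝ => (Real.log t + c) ^ k / t) volume 1 x := by
    apply ContinuousOn.intervalIntegrable
    apply ContinuousOn.div
    · apply ContinuousOn.pow
      apply ContinuousOn.add _ continuousOn_const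
      apply Real.continuousOn_log.mono
      intro t ht
      rw [Set.uIcc_of_le hx] at ht
      exact ne_of_gt (lt_of_lt_of_le one_pos ht.1)
    · exact continuousOn_id
    · intro t ht
      rw [Set.uIcc_of_le hx] at ht
      exact ne_of_gt (lt_of_lt_of_le one_pos ht.1)
  rw [intervalIntegral.integral_eq_sub_of_hasDerivAt hderiv hint]
  rw [Real.log_one]; ring


lemma logpow_intable (k : ℕ) (c : ℝ) {x : ℝ} (hx : 1 ≤ x) :
    IntervalIntegrable (fun t : ℝ => (Real.log t + c) ^ k / t) volume 1 x := by
  apply ContinuousOn.intervalIntegrable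
  apply ContinuousOn.div
  · apply ContinuousOn.pow
    apply ContinuousOn.add _ continuousOn_const
    apply Real.continuousOn_log.mono
    intro t ht
    rw [Set.uIcc_of_le hx] at ht
    exact ne_of_gt (lt_of_lt_of_le one_pos ht.1)
  · exact continuousOn_id
  · intro t ht
    rw [Set.uIcc_of_le hx] at ht
    exact ne_of_gt (lt_of_lt_of_le one_pos ht.1)

lemma phi_bound (n : ℕ) : ∀ {x : ℝ}, 1 ≤ x →
    |Phi (n+1) x - (Real.log x) ^ (n+1) / ((n+1).factorial : ℝ)| ≤ (Real.log x + 1) ^ n := by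
  induction n with
  | zero =>
    intro x hx
    have hx0 : (0:ℝ) < x := lt_of_lt_of_le one_pos hx
    rw [phi_one (by linarith)]
    have hkey : Real.log (1 + x) - Real.log x = Real.log ((1 + x) / x) := by
      rw [Real.log_div (by linarith) (ne_of_gt hx0)]
    have h1 : (1:ℝ) ≤ (1 + x) / x := by
      rw [le_div_iff₀ hx0]; linarith
    have h2 : Real.log ((1 + x) / x) ≤ (1 + x) / x - 1 :=
      Real.log_le_sub_one_of_pos (by linarith)
    have h3 : (1 + x) / x - 1 ≤ 1 := by
      rw [div_sub_one (ne_of_gt hx0), div_le_one hx0]; linarith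
    have h4 : 0 ≤ Real.log ((1 + x) / x) := Real.log_nonneg h1
    simp only [zero_add, pow_one, Nat.factorial_one, Nat.cast_one, div_one, pow_zero]
    rw [abs_le]
    constructor <;> nlinarith [h2, h3, h4, hkey]
  | succ n ih =>
    intro x hx
    have hx0 : (0:ℝ) < x := lt_of_lt_of_le one_pos hx
    set L := Real.log x with hL
    have hL0 : 0 ≤ L := Real.log_nonneg hx
    -- split the integral
    have hsplit : Phi (n+2) x = Phi (n+2) 1 + ∫ t in (1:ℝ)..x, Phi (n+1) t / t := by
      show (∫ t in (0:ℝ)..x, Phi (n+1) t / t) = _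
      rw [← intervalIntegral.integral_add_adjacent_intervals
        (phi_int (n+1) le_rfl zero_le_one) (phi_int (n+1) zero_le_one (by linarith))]
      rfl
    -- decompose the integrand
    have hu : IntervalIntegrable
        (fun t : ℝ => (1 / (((n+1).factorial : ℝ))) * ((Real.log t + 0) ^ (n+1) / t)) volume 1 x :=
      (logpow_intable (n+1) 0 hx).const_mul _
    have hf : IntervalIntegrable (fun t : ℝ => Phi (n+1) t / t) volume 1 x :=
      phi_int (n+1) zero_le_one (by linarith)
    have hfu : IntervalIntegrable (fun t : ℝ =>
        Phi (n+1) t / t - (1 / (((n+1).factorial : ℝ))) * ((Real.log t + 0) ^ (n+1) / t)) volume 1 x :=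
      hf.sub hu
    have hdecomp : (∫ t in (1:ℝ)..x, Phi (n+1) t / t)
        = (∫ t in (1:ℝ)..x, (1 / (((n+1).factorial : ℝ))) * ((Real.log t + 0) ^ (n+1) / t))
          + ∫ t in (1:ℝ)..x,
            (Phi (n+1) t / t - (1 / (((n+1).factorial : ℝ))) * ((Real.log t + 0) ^ (n+1) / t)) := by
      rw [← intervalIntegral.integral_add hu hfu]
      congr 1
      funext t
      ring
    -- value of the main term
    have hmain : (∫ t in (1:ℝ)..x, (1 / (((n+1).factorial : ℝ))) * ((Real.log t + 0) ^ (n+1) / t))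
        = L ^ (n+2) / ((n+2).factorial : ℝ) := by
      rw [intervalIntegral.integral_const_mul, int_logpow (n+1) 0 hx]
      have hfac : ((n+2).factorial : ℝ) = ((n:ℝ)+2) * ((n+1).factorial : ℝ) := by
        rw [Nat.factorial_succ (n+1)]; push_cast; ring
      have hz : (0:ℝ) ^ (n+1+1) = 0 := zero_pow (by omega)
      rw [hfac, hz, add_zero, sub_zero, ← hL]
      have h1 : ((n+1).factorial : ℝ) ≠ 0 := by positivity
      have h2 : ((n:ℝ)+2) ≠ 0 := by positivity
      push_cast
      rw [div_mul_div_comm, one_mul]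
      ring_nf
    -- bound on the error term
    have herr : |∫ t in (1:ℝ)..x,
        (Phi (n+1) t / t - (1 / (((n+1).factorial : ℝ))) * ((Real.log t + 0) ^ (n+1) / t))|
        ≤ (L + 1) ^ (n+1) - 1 := by
      have habs : |∫ t in (1:ℝ)..x,
          (Phi (n+1) t / t - (1 / (((n+1).factorial : ℝ))) * ((Real.log t + 0) ^ (n+1) / t))|
          ≤ ∫ t in (1:ℝ)..x,
            |Phi (n+1) t / t - (1 / (((n+1).factorial : ℝ))) * ((Real.log t + 0) ^ (n+1) / t)| := by
        exact intervalIntegral.abs_integral_le_integral_abs hx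
      have hmono : (∫ t in (1:ℝ)..x,
          |Phi (n+1) t / t - (1 / (((n+1).factorial : ℝ))) * ((Real.log t + 0) ^ (n+1) / t)|)
          ≤ ∫ t in (1:ℝ)..x, (Real.log t + 1) ^ n / t := by
        apply intervalIntegral.integral_mono_on hx hfu.abs (logpow_intable n 1 hx)
        intro t ht
        have ht0 : (0:ℝ) < t := lt_of_lt_of_le one_pos ht.1
        have heq : Phi (n+1) t / t - (1 / (((n+1).factorial : ℝ))) * ((Real.log t + 0) ^ (n+1) / t)
            = (Phi (n+1) t - (Real.log t) ^ (n+1) / ((n+1).factorial : ℝ)) / t := by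
          have hfac : ((n+1).factorial : ℝ) ≠ 0 := by positivity
          field_simp
          ring
        rw [heq, abs_div, abs_of_pos ht0]
        exact (div_le_div_iff_of_pos_right ht0).2 (ih ht.1)
      have hval : (∫ t in (1:ℝ)..x, (Real.log t + 1) ^ n / t)
          = ((L + 1) ^ (n+1) - 1) / (n+1) := by
        rw [int_logpow n 1 hx, one_pow, ← hL]
      have hfin : ((L + 1) ^ (n+1) - 1) / ((n:ℝ)+1) ≤ (L + 1) ^ (n+1) - 1 := by
        have h1 : (1:ℝ) ≤ (L + 1) ^ (n+1) := one_le_pow₀ (by linarith)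
        have h2 : (1:ℝ) ≤ (n:ℝ) + 1 := by
          have := Nat.cast_nonneg (α := ℝ) n; linarith
        rw [div_le_iff₀ (show (0:ℝ) < (n:ℝ)+1 by positivity)]
        nlinarith
      calc _ ≤ _ := habs
        _ ≤ _ := hmono
        _ = ((L + 1) ^ (n+1) - 1) / ((n:ℝ)+1) := hval
        _ ≤ _ := hfin
    -- |Phi (n+2) 1| ≤ 1
    have hP1 : |Phi (n+2) 1| ≤ 1 := by
      rw [abs_of_nonneg (phi_nonneg (n+2) zero_le_one)]
      exact phi_le (n+2) zero_le_one
    -- assemble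
    have : Phi (n+2) x - L ^ (n+2) / ((n+2).factorial : ℝ)
        = Phi (n+2) 1 + ∫ t in (1:ℝ)..x,
          (Phi (n+1) t / t - (1 / (((n+1).factorial : ℝ))) * ((Real.log t + 0) ^ (n+1) / t)) := by
      rw [hsplit, hdecomp, hmain]; ring
    calc |Phi (n+2) x - L ^ (n+2) / ((n+2).factorial : ℝ)|
        ≤ |Phi (n+2) 1| + |∫ t in (1:ℝ)..x,
          (Phi (n+1) t / t - (1 / (((n+1).factorial : ℝ))) * ((Real.log t + 0) ^ (n+1) / t))| := by
          rw [this]; exact abs_add_le _ _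
      _ ≤ 1 + ((L + 1) ^ (n+1) - 1) := add_le_add hP1 herr
      _ = (L + 1) ^ (n+1) := by ring

/-- For every integer `n ≥ 1`, `lim_{x → +∞} Φ_n(x) / log^n(x) = 1/n!`. -/
theorem stmt5 (n : ℕ) (hn : 1 ≤ n) :
    Filter.Tendsto (fun x : ℝ => Phi n x / (Real.log x) ^ n)
      Filter.atTop (nhds (1 / (n.factorial : ℝ))) := by
  obtain ⟨m, rfl⟩ : ∃ m, n = m + 1 := ⟨n - 1, by omega⟩
  have key : Tendsto (fun x : ℝ => Phi (m+1) x / (Real.log x) ^ (m+1) - 1 / ((m+1).factorial : ℝ))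
      atTop (nhds 0) := by
    apply squeeze_zero_norm' (a := fun x : ℝ => 2 ^ m / Real.log x)
    · filter_upwards [eventually_ge_atTop (Real.exp 1)] with x hxe
      have hx1 : (1:ℝ) ≤ x := by
        have h := Real.add_one_le_exp 1
        linarith
      set L := Real.log x with hLdef
      have hL1 : (1:ℝ) ≤ L := by
        rw [hLdef, ← Real.log_exp 1]
        exact Real.log_le_log (Real.exp_pos 1) hxe
      have hL0 : (0:ℝ) < L := lt_of_lt_of_le one_pos hL1
      have hLn : (0:ℝ) < L ^ (m+1) := pow_pos hL0 _
      have hfac : ((m+1).factorial : ℝ) ≠ 0 := by positivity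
      have heq : Phi (m+1) x / L ^ (m+1) - 1 / ((m+1).factorial : ℝ)
          = (Phi (m+1) x - L ^ (m+1) / ((m+1).factorial : ℝ)) / L ^ (m+1) := by
        field_simp
      rw [Real.norm_eq_abs, heq, abs_div, abs_of_pos hLn]
      have hb := phi_bound m hx1
      rw [← hLdef] at hb
      calc |Phi (m+1) x - L ^ (m+1) / ((m+1).factorial : ℝ)| / L ^ (m+1)
          ≤ (L + 1) ^ m / L ^ (m+1) := (div_le_div_iff_of_pos_right hLn).2 hb
        _ ≤ (2 * L) ^ m / L ^ (m+1) := by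
            apply (div_le_div_iff_of_pos_right hLn).2
            apply pow_le_pow_left₀ (by linarith) (by linarith)
        _ = 2 ^ m / L := by
            rw [mul_pow, pow_succ, mul_comm (L ^ m) L,
              mul_div_mul_right _ _ (ne_of_gt (pow_pos hL0 m))]
    · exact Tendsto.div_atTop tendsto_const_nhds Real.tendsto_log_atTop
  have h2 := key.add_const (1 / (((m+1).factorial : ℝ)))
  simpa using h2
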